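/- Let H be a graph whose vertex set is partitioned into nonempty disjoint sets V₁,…,V_t, each inducing a connected subgraph of H. Let A be the auxiliary graph on vertex set {1,…,t} in which distinct i and j are adjacent if and only if H contains an edge with one endpoint in V_i and the other in V_j. If A contains a path with L edges, then H contains a path with at least L edges. -/

import Mathlib

open SimpleGraph

private lemma blob_lift_aux {V : Type*} (H : SimpleGraph V) (t : ℕ)
    (P : Fin t → Set V)
    (hdisj : ∀ i j, i ≠ j → Disjoint (P i) (P j))
    (hconn : ∀ i, (H.induce (P i)).Connected)
    (A : SimpleGraph (Fin t))
    (hA : ∀ i j, A.Adj i j ↔ i ≠ j ∧ ∃ u ∈ P i, ∃ w ∈ P j, H.Adj u w) :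
    ∀ {i j : Fin t} (p : A.Walk i j), p.IsPath → ∀ u ∈ P i,
      ∃ w ∈ P j, ∃ q : H.Walk u w, q.IsPath ∧ p.length ≤ q.length ∧
        ∀ x ∈ q.support, ∃ k ∈ p.support, x ∈ P k := by
  intro i j p
  classical
  induction p with
  | nil =>
    intro _ u hu
    exact ⟨u, hu, Walk.nil, Walk.IsPath.nil, le_refl _,
      by simp; exact hu⟩
  | @cons i i' j hadj p' ih =>
    intro hp u hu
    obtain ⟨hne, u', hu', w', hw', huw⟩ := (hA i i').1 hadj
    -- path inside P i from u to u'
    have hcon := (hconn i).preconnected ⟨u, hu⟩ ⟨u', hu'⟩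
    obtain ⟨r⟩ := hcon
    let f : H.induce (P i) →g H := ⟨Subtype.val, fun h => h⟩
    have hfinj : Function.Injective f := Subtype.val_injective
    let q₁ : H.Walk u u' := (((r.toPath : (H.induce (P i)).Path ⟨u,hu⟩ ⟨u',hu'⟩) : (H.induce (P i)).Walk ⟨u,hu⟩ ⟨u',hu'⟩).map f).copy rfl rfl
    have hq₁path : q₁.IsPath :=
      Walk.map_isPath_of_injective hfinj r.toPath.2
    have hq₁mem : ∀ x ∈ q₁.support, x ∈ P i := by
      intro x hx
      simp only [q₁, Walk.support_copy, Walk.support_map, List.mem_map] at hx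
      obtain ⟨⟨y, hy⟩, _, rfl⟩ := hx
      exact hy
    -- recursive part
    obtain ⟨w, hw, q₂, hq₂path, hq₂len, hq₂mem⟩ :=
      ih hp.of_cons w' hw'
    have hinot : i ∉ p'.support := by
      intro hmem
      exact (Walk.cons_isPath_iff _ _).1 hp |>.2 hmem
    refine ⟨w, hw, q₁.append (Walk.cons huw q₂), ?_, ?_, ?_⟩
    · rw [Walk.isPath_def, Walk.support_append, List.nodup_append]
      refine ⟨hq₁path.support_nodup, ?_, ?_⟩
      · have : (Walk.cons huw q₂).support = u' :: q₂.support := by simp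
        rw [this]
        exact ((Walk.cons_isPath_iff huw q₂).2
          ⟨hq₂path, by
            intro hmem
            obtain ⟨k, hk, hxk⟩ := hq₂mem u' hmem
            have : i ≠ k := fun h => hinot (h ▸ hk)
            exact (hdisj i k this).ne_of_mem hu' hxk rfl⟩).support_nodup.of_cons
      · intro x hx₁ y hx₂ hxy; subst hxy
        have hxi := hq₁mem x hx₁
        have : (Walk.cons huw q₂).support = u' :: q₂.support := by simp
        rw [this] at hx₂
        have hx₂' : x ∈ q₂.support := hx₂
        obtain ⟨k, hk, hxk⟩ := hq₂mem x hx₂'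
        have : i ≠ k := fun h => hinot (h ▸ hk)
        exact (hdisj i k this).ne_of_mem hxi hxk rfl
    · simp only [Walk.length_append, Walk.length_cons]
      omega
    · intro x hx
      rw [Walk.mem_support_append_iff] at hx
      rcases hx with hx | hx
      · exact ⟨i, by simp, hq₁mem x hx⟩
      · rw [Walk.support_cons, List.mem_cons] at hx
        rcases hx with rfl | hx
        · exact ⟨i, by simp, hu'⟩
        · obtain ⟨k, hk, hxk⟩ := hq₂mem x hx
          exact ⟨k, by simp [hk], hxk⟩

/-- Lifting a path of blobs to a path of vertices: if the vertex set of `H` is partitioned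
into nonempty connected blobs `V₁, …, V_t`, and the auxiliary graph `A` on `{1,…,t}`
(where `i ∼ j` iff `H` has an edge between `V_i` and `V_j`) contains a path with `L`
edges, then `H` contains a path with at least `L` edges. -/
theorem path_lift_from_blob_path {V : Type*} (H : SimpleGraph V) (t : ℕ)
    (P : Fin t → Set V)
    (hne : ∀ i, (P i).Nonempty)
    (hdisj : ∀ i j, i ≠ j → Disjoint (P i) (P j))
    (hcover : (⋃ i, P i) = Set.univ)
    (hconn : ∀ i, (H.induce (P i)).Connected)
    (A : SimpleGraph (Fin t))
    (hA : ∀ i j, A.Adj i j ↔ i ≠ j ∧ ∃ u ∈ P i, ∃ w ∈ P j, H.Adj u w)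
    (L : ℕ) (hpath : ∃ (i j : Fin t) (p : A.Walk i j), p.IsPath ∧ p.length = L) :
    ∃ (u w : V) (q : H.Walk u w), q.IsPath ∧ L ≤ q.length := by
  obtain ⟨i, j, p, hp, rfl⟩ := hpath
  obtain ⟨u, hu⟩ := hne i
  obtain ⟨w, hw, q, hq, hlen, -⟩ :=
    blob_lift_aux H t P hdisj hconn A hA p hp u hu
  exact ⟨u, w, q, hq, hlen⟩
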